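/- Let T be a self-adjoint operator on a finite-dimensional inner product space with α I ≤ T ≤ β I for 0 < α ≤ β, and let Ψ be a positive unital linear map on operators (e.g., Ψ(X) = S X S + A X A for complementary orthogonal projections S, A with S + A = I). Then Ψ(T)⁻² ≤ ((α+β)²/(4αβ)) Ψ(T⁻²). -/

import Mathlib

open Matrix

section Helpers

variable {n : ℕ}

private lemma psd_smul' (c : ℝ) (hc : 0 ≤ c) {M : Matrix (Fin n) (Fin n) ℝ} (hM : M.PosSemidef) :
    (c • M).PosSemidef := by
  refine Matrix.PosSemidef.of_dotProduct_mulVec_nonneg ?_ fun x => ?_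
  · show _ = _
    rw [conjTranspose_smul, hM.1.eq, star_trivial]
  · rw [Matrix.smul_mulVec, dotProduct_smul, smul_eq_mul]
    exact mul_nonneg hc (hM.dotProduct_mulVec_nonneg x)

private lemma pd_smul' (c : ℝ) (hc : 0 < c) {M : Matrix (Fin n) (Fin n) ℝ} (hM : M.PosDef) :
    (c • M).PosDef := by
  refine Matrix.PosDef.of_dotProduct_mulVec_pos ?_ fun x hx => ?_
  · show _ = _
    rw [conjTranspose_smul, hM.1.eq, star_trivial]
  · rw [Matrix.smul_mulVec, dotProduct_smul, smul_eq_mul]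
    exact mul_pos hc (hM.dotProduct_mulVec_pos hx)

private lemma dot_conj' (S X : Matrix (Fin n) (Fin n) ℝ) (hSH : S.IsHermitian) (x : Fin n → ℝ) :
    star x ⬝ᵥ (S * X * S) *ᵥ x = star (S *ᵥ x) ⬝ᵥ X *ᵥ (S *ᵥ x) := by
  rw [star_mulVec, hSH.eq, ← Matrix.mulVec_mulVec, ← dotProduct_mulVec,
    ← Matrix.mulVec_mulVec, dotProduct_mulVec (star x) S]

private lemma psi_herm' {S A X : Matrix (Fin n) (Fin n) ℝ} (hSH : S.IsHermitian)
    (hAH : A.IsHermitian) (hX : X.IsHermitian) : (S * X * S + A * X * A).IsHermitian := by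
  show _ = _
  simp only [conjTranspose_add, conjTranspose_mul, hSH.eq, hAH.eq, hX.eq, Matrix.mul_assoc]

private lemma psi_psd' {S A X : Matrix (Fin n) (Fin n) ℝ} (hSH : S.IsHermitian)
    (hAH : A.IsHermitian) (hX : X.PosSemidef) : (S * X * S + A * X * A).PosSemidef := by
  refine Matrix.PosSemidef.of_dotProduct_mulVec_nonneg (psi_herm' hSH hAH hX.1) fun x => ?_
  rw [Matrix.add_mulVec, dotProduct_add, dot_conj' S X hSH, dot_conj' A X hAH]
  exact add_nonneg (hX.dotProduct_mulVec_nonneg _) (hX.dotProduct_mulVec_nonneg _)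

private lemma psi_pd' {S A X : Matrix (Fin n) (Fin n) ℝ} (hSH : S.IsHermitian)
    (hAH : A.IsHermitian) (hSum : S + A = 1) (hX : X.PosDef) :
    (S * X * S + A * X * A).PosDef := by
  refine Matrix.PosDef.of_dotProduct_mulVec_pos (psi_herm' hSH hAH hX.1) fun x hx => ?_
  rw [Matrix.add_mulVec, dotProduct_add, dot_conj' S X hSH, dot_conj' A X hAH]
  rcases eq_or_ne (S *ᵥ x) 0 with hS | hS
  · have hA : A *ᵥ x ≠ 0 := by
      intro hA
      apply hx
      have : (S + A) *ᵥ x = 0 := by rw [Matrix.add_mulVec, hS, hA, add_zero]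
      rw [hSum] at this; simpa using this
    have := hX.dotProduct_mulVec_pos hA
    have h0 : star (S *ᵥ x) ⬝ᵥ X *ᵥ (S *ᵥ x) = 0 := by rw [hS]; simp
    linarith
  · have := hX.dotProduct_mulVec_pos hS
    have h0 : 0 ≤ star (A *ᵥ x) ⬝ᵥ X *ᵥ (A *ᵥ x) := hX.posSemidef.dotProduct_mulVec_nonneg _
    linarith

private lemma pd_shift' (T : Matrix (Fin n) (Fin n) ℝ) (α : ℝ) (hα : 0 < α)
    (hTα : (T - α • 1).PosSemidef) : T.PosDef := by
  have h1 : ((α : ℝ) • (1 : Matrix (Fin n) (Fin n) ℝ)).PosDef := by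
    refine Matrix.PosDef.of_dotProduct_mulVec_pos ?_ fun x hx => ?_
    · show _ = _
      rw [conjTranspose_smul, star_trivial, conjTranspose_one]
    · rw [Matrix.smul_mulVec, dotProduct_smul, Matrix.one_mulVec, smul_eq_mul]
      exact mul_pos hα (dotProduct_star_self_pos_iff.2 hx)
  have := h1.add_posSemidef hTα
  simpa using this

private lemma pd_mul_self' (T : Matrix (Fin n) (Fin n) ℝ) (hT : T.PosDef) (hTH : T.IsHermitian) :
    (T * T).PosDef := by
  refine Matrix.PosDef.of_dotProduct_mulVec_pos ?_ fun x hx => ?_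
  · show _ = _
    rw [conjTranspose_mul, hTH.eq]
  · have hx' : T *ᵥ x ≠ 0 := by
      intro h
      apply hx
      have := congrArg (T⁻¹ *ᵥ ·) h
      simpa [Matrix.mulVec_mulVec,
        Matrix.nonsing_inv_mul T (isUnit_iff_ne_zero.2 hT.det_pos.ne')] using this
    have heq : star x ⬝ᵥ (T * T) *ᵥ x = star (T *ᵥ x) ⬝ᵥ (T *ᵥ x) := by
      rw [star_mulVec, hTH.eq, ← Matrix.mulVec_mulVec, dotProduct_mulVec]
    rw [heq]
    exact dotProduct_star_self_pos_iff.2 hx'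

private lemma fromBlocks_diag_psd' {E F : Matrix (Fin n) (Fin n) ℝ} (hE : E.PosSemidef)
    (hF : F.PosSemidef) : (Matrix.fromBlocks E 0 0 F).PosSemidef := by
  refine Matrix.PosSemidef.of_dotProduct_mulVec_nonneg ?_ fun x => ?_
  · show _ = _
    rw [Matrix.fromBlocks_conjTranspose]
    simp only [conjTranspose_zero]
    rw [hE.1.eq, hF.1.eq]
  · have hx : x = Sum.elim (x ∘ Sum.inl) (x ∘ Sum.inr) := by
      ext (i | i) <;> rfl
    rw [hx, Matrix.fromBlocks_mulVec]
    simp only [Matrix.zero_mulVec, add_zero, zero_add]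
    rw [show star (Sum.elim (x ∘ Sum.inl) (x ∘ Sum.inr)) =
      Sum.elim (star (x ∘ Sum.inl)) (star (x ∘ Sum.inr)) by ext (i | i) <;> rfl]
    rw [sumElim_dotProduct_sumElim]
    exact add_nonneg (hE.dotProduct_mulVec_nonneg _) (hF.dotProduct_mulVec_nonneg _)

/-- Loewner antitonicity of the inverse. -/
private lemma inv_sub_inv_psd' {P Q : Matrix (Fin n) (Fin n) ℝ} (hP : P.PosDef) (hQ : Q.PosDef)
    (h : (Q - P).PosSemidef) : (P⁻¹ - Q⁻¹).PosSemidef := by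
  haveI : Invertible P := P.invertibleOfIsUnitDet (isUnit_iff_ne_zero.2 hP.det_pos.ne')
  haveI : Invertible Q := Q.invertibleOfIsUnitDet (isUnit_iff_ne_zero.2 hQ.det_pos.ne')
  have h1 : (Matrix.fromBlocks P 1 (1 : Matrix (Fin n) (Fin n) ℝ)ᴴ P⁻¹).PosSemidef :=
    (Matrix.PosDef.fromBlocks₁₁ 1 P⁻¹ hP).mpr (by simpa using Matrix.PosSemidef.zero)
  have h2 : (Matrix.fromBlocks Q 1 (1 : Matrix (Fin n) (Fin n) ℝ)ᴴ P⁻¹).PosSemidef := by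
    have hadd := h1.add (fromBlocks_diag_psd' h Matrix.PosSemidef.zero)
    rw [Matrix.fromBlocks_add] at hadd
    have e1 : P + (Q - P) = Q := by abel
    simpa [e1] using hadd
  have := (Matrix.PosDef.fromBlocks₁₁ 1 P⁻¹ hQ).mp h2
  simpa using this

/-- Choi's inequality for the pinching map. -/
private lemma choi_pinching' (S A X : Matrix (Fin n) (Fin n) ℝ)
    (hSH : S.IsHermitian) (hAH : A.IsHermitian)
    (hS2 : S * S = S) (hA2 : A * A = A) (hSum : S + A = 1)
    (hX : X.PosDef)
    (hY : (S * X * S + A * X * A).PosDef) :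
    ((S * X⁻¹ * S + A * X⁻¹ * A) - (S * X * S + A * X * A)⁻¹).PosSemidef := by
  haveI : Invertible X := X.invertibleOfIsUnitDet (isUnit_iff_ne_zero.2 hX.det_pos.ne')
  haveI : Invertible (S * X * S + A * X * A) :=
    (S * X * S + A * X * A).invertibleOfIsUnitDet (isUnit_iff_ne_zero.2 hY.det_pos.ne')
  have hM0 : (Matrix.fromBlocks X 1 (1 : Matrix (Fin n) (Fin n) ℝ)ᴴ X⁻¹).PosSemidef :=
    (Matrix.PosDef.fromBlocks₁₁ 1 X⁻¹ hX).mpr (by simpa using Matrix.PosSemidef.zero)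
  set NS : Matrix (Fin n ⊕ Fin n) (Fin n ⊕ Fin n) ℝ := Matrix.fromBlocks S 0 0 S with hNS
  set NA : Matrix (Fin n ⊕ Fin n) (Fin n ⊕ Fin n) ℝ := Matrix.fromBlocks A 0 0 A with hNA
  have hPS := (hM0.mul_mul_conjTranspose_same NS).add (hM0.mul_mul_conjTranspose_same NA)
  have key : NS * Matrix.fromBlocks X 1 (1 : Matrix (Fin n) (Fin n) ℝ)ᴴ X⁻¹ * NSᴴ +
      NA * Matrix.fromBlocks X 1 (1 : Matrix (Fin n) (Fin n) ℝ)ᴴ X⁻¹ * NAᴴ =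
      Matrix.fromBlocks (S * X * S + A * X * A) 1 (1 : Matrix (Fin n) (Fin n) ℝ)ᴴ
        (S * X⁻¹ * S + A * X⁻¹ * A) := by
    have hSt : Sᵀ = S := by simpa using hSH.eq
    have hAt : Aᵀ = A := by simpa using hAH.eq
    simp [hNS, hNA, Matrix.fromBlocks_conjTranspose, Matrix.fromBlocks_transpose,
      Matrix.fromBlocks_multiply, Matrix.fromBlocks_add, hSt, hAt, hS2, hA2, hSum,
      Matrix.mul_assoc]
  rw [key] at hPS
  have := (Matrix.PosDef.fromBlocks₁₁ 1 (S * X⁻¹ * S + A * X⁻¹ * A) hY).mp hPS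
  simpa using this

private lemma chordP' (T : Matrix (Fin n) (Fin n) ℝ) (α β : ℝ)
    (hTα : (T - α • 1).PosSemidef) (hTβ : (β • (1 : Matrix (Fin n) (Fin n) ℝ) - T).PosSemidef) :
    ((T - α • 1) * (β • (1 : Matrix (Fin n) (Fin n) ℝ) - T)).PosSemidef := by
  obtain ⟨R, hRsa, hRR⟩ : ∃ R : Matrix (Fin n) (Fin n) ℝ, Rᴴ = R ∧ R * R = T - α • 1 := by
    open scoped MatrixOrder in
    exact ⟨CFC.sqrt (T - α • 1), (CFC.sqrt_nonneg _).posSemidef.1,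
      CFC.sqrt_mul_sqrt_self _ hTα.nonneg⟩
  have key : (T - α • 1) * (β • (1 : Matrix (Fin n) (Fin n) ℝ) - T) =
      R * (β • (1 : Matrix (Fin n) (Fin n) ℝ) - T) * Rᴴ := by
    rw [hRsa]
    have hF : (β • (1 : Matrix (Fin n) (Fin n) ℝ) - T) =
        (β - α) • (1 : Matrix (Fin n) (Fin n) ℝ) - (T - α • 1) := by module
    rw [hF, ← hRR]
    noncomm_ring
  rw [key]
  exact hTβ.mul_mul_conjTranspose_same _

end Helpers

theorem kantorovich_type_bound_for_pinching {n : ℕ}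
    (S A T : Matrix (Fin n) (Fin n) ℝ)
    (hSH : S.IsHermitian) (hAH : A.IsHermitian)
    (hS2 : S * S = S) (hA2 : A * A = A) (hSA : S * A = 0) (hSum : S + A = 1)
    (α β : ℝ) (hα : 0 < α) (hαβ : α ≤ β)
    (hT : T.IsHermitian)
    (hTα : (T - α • 1).PosSemidef) (hTβ : (β • 1 - T).PosSemidef) :
    (((α + β) ^ 2 / (4 * α * β)) •
        (S * (T⁻¹ * T⁻¹) * S + A * (T⁻¹ * T⁻¹) * A) -
      ((S * T * S + A * T * A)⁻¹ * (S * T * S + A * T * A)⁻¹)).PosSemidef := by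
  have hβ : 0 < β := lt_of_lt_of_le hα hαβ
  set K : ℝ := (α + β) ^ 2 / (4 * α * β) with hKdef
  have hK : 0 < K := by positivity
  clear_value K
  set Y : Matrix (Fin n) (Fin n) ℝ := S * T * S + A * T * A with hYdef
  set Q2 : Matrix (Fin n) (Fin n) ℝ := S * (T * T) * S + A * (T * T) * A with hQ2def
  set Wm : Matrix (Fin n) (Fin n) ℝ := S * (T⁻¹ * T⁻¹) * S + A * (T⁻¹ * T⁻¹) * A with hWdef
  have hT1 : T.PosDef := pd_shift' T α hα hTα
  have hTT : (T * T).PosDef := pd_mul_self' T hT1 hT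
  have hYpd : Y.PosDef := psi_pd' hSH hAH hSum hT1
  have hQ2pd : Q2.PosDef := psi_pd' hSH hAH hSum hTT
  -- Choi inequality applied to T²
  have hChoi : (Wm - Q2⁻¹).PosSemidef := by
    have := choi_pinching' S A (T * T) hSH hAH hS2 hA2 hSum hTT hQ2pd
    rw [Matrix.mul_inv_rev] at this
    exact this
  -- chord inequality: Ψ(T²) ≤ (α+β)Y - αβ·1
  have hP : ((T - α • 1) * (β • (1 : Matrix (Fin n) (Fin n) ℝ) - T)).PosSemidef :=
    chordP' T α β hTα hTβ
  have hΨP : ((α + β) • Y - (α * β) • (1 : Matrix (Fin n) (Fin n) ℝ) - Q2).PosSemidef := by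
    have h1 := psi_psd' hSH hAH hP
    have heq : S * ((T - α • 1) * (β • (1 : Matrix (Fin n) (Fin n) ℝ) - T)) * S +
        A * ((T - α • 1) * (β • (1 : Matrix (Fin n) (Fin n) ℝ) - T)) * A =
        (α + β) • Y - (α * β) • (1 : Matrix (Fin n) (Fin n) ℝ) - Q2 := by
      have hPx : (T - α • 1) * (β • (1 : Matrix (Fin n) (Fin n) ℝ) - T) =
          (α + β) • T - T * T - (α * β) • 1 := by
        noncomm_ring
        module
      rw [hPx, hYdef, hQ2def]
      simp only [Matrix.mul_sub, Matrix.sub_mul, Matrix.mul_add, Matrix.add_mul,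
        mul_smul_comm, smul_mul_assoc, Matrix.mul_one, Matrix.one_mul, hS2, hA2,
        Matrix.mul_assoc]
      rw [← hSum]
      module
    rw [heq] at h1
    exact h1
  -- perfect square: (α+β)Y - αβ·1 ≤ K Y²
  have hSq : (K • (Y * Y) - ((α + β) • Y - (α * β) • (1 : Matrix (Fin n) (Fin n) ℝ))).PosSemidef := by
    set H : Matrix (Fin n) (Fin n) ℝ := (2 * K) • Y - (α + β) • 1 with hHdef
    have hHH : H.IsHermitian := by
      show _ = _
      rw [conjTranspose_sub, conjTranspose_smul, conjTranspose_smul, hYpd.1.eq,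
        conjTranspose_one, star_trivial, star_trivial]
    have hHpsd : (H * Hᴴ).PosSemidef := Matrix.posSemidef_self_mul_conjTranspose H
    rw [hHH.eq] at hHpsd
    have hid : H * H = (4 * K) • (K • (Y * Y) - ((α + β) • Y - (α * β) • (1 : Matrix (Fin n) (Fin n) ℝ))) := by
      have hcoef : (α + β) ^ 2 = 4 * K * (α * β) := by
        rw [hKdef]; field_simp
      rw [hHdef]
      simp only [Matrix.mul_sub, Matrix.sub_mul, mul_smul_comm, smul_mul_assoc,
        Matrix.mul_one, Matrix.one_mul, smul_smul, smul_sub]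
      match_scalars
      all_goals try ring
      all_goals linear_combination hcoef
    have h4K : (0:ℝ) < 4 * K := by linarith
    have h2 := psd_smul' (4 * K)⁻¹ (inv_nonneg.2 h4K.le) hHpsd
    rw [hid, smul_smul, inv_mul_cancel₀ h4K.ne', one_smul] at h2
    exact h2
  -- combine: Q2 ≤ K Y²
  have hKYQ : (K • (Y * Y) - Q2).PosSemidef := by
    have := hΨP.add hSq
    have e : ((α + β) • Y - (α * β) • (1 : Matrix (Fin n) (Fin n) ℝ) - Q2) +
        (K • (Y * Y) - ((α + β) • Y - (α * β) • (1 : Matrix (Fin n) (Fin n) ℝ))) =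
        K • (Y * Y) - Q2 := by abel
    rw [e] at this
    exact this
  have hKYpd : (K • (Y * Y)).PosDef := pd_smul' K hK (pd_mul_self' Y hYpd hYpd.1)
  -- invert: (K Y²)⁻¹ ≤ Q2⁻¹
  have hInv : (Q2⁻¹ - (K • (Y * Y))⁻¹).PosSemidef := inv_sub_inv_psd' hQ2pd hKYpd hKYQ
  have hFin : (Wm - (K • (Y * Y))⁻¹).PosSemidef := by
    have := hChoi.add hInv
    have e : (Wm - Q2⁻¹) + (Q2⁻¹ - (K • (Y * Y))⁻¹) = Wm - (K • (Y * Y))⁻¹ := by abel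
    rw [e] at this
    exact this
  -- rewrite (K • Y²)⁻¹
  have hKYinv : (K • (Y * Y))⁻¹ = K⁻¹ • (Y⁻¹ * Y⁻¹) := by
    haveI : Invertible K := invertibleOfNonzero hK.ne'
    rw [Matrix.inv_smul (A := Y * Y) K (isUnit_iff_ne_zero.2 (pd_mul_self' Y hYpd hYpd.1).det_pos.ne'),
      Matrix.mul_inv_rev, invOf_eq_inv]
  rw [hKYinv] at hFin
  have := psd_smul' K hK.le hFin
  have e : K • (Wm - K⁻¹ • (Y⁻¹ * Y⁻¹)) = K • Wm - Y⁻¹ * Y⁻¹ := by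
    rw [smul_sub, smul_smul, mul_inv_cancel₀ hK.ne', one_smul]
  rw [e] at this
  exact this
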